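/- There is no n ∈ ℤ × ℤ of the form (a, b) with a = ±1 and 2a − 5b = ±1; consequently, the subgroups of ℤ² generated by (0,1) and by (5,2) have no common complementary summand, even though the subgroups generated by (1,0) and (7,3) are complements of them respectively. -/

import Mathlib

private def gmap : ℤ × ℤ →+ ℤ where
  toFun p := 2 * p.1 - 5 * p.2
  map_zero' := by simp
  map_add' p q := by simp; ring

private lemma gmap_apply (p : ℤ × ℤ) : gmap p = 2 * p.1 - 5 * p.2 := rfl

private lemma closure01 :
    AddSubgroup.closure {((0 : ℤ), (1 : ℤ))} = (AddMonoidHom.fst ℤ ℤ).ker := by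
  ext ⟨x, y⟩
  rw [AddSubgroup.mem_closure_singleton, AddMonoidHom.mem_ker]
  constructor
  · rintro ⟨n, hn⟩
    have := congrArg Prod.fst hn
    simpa using this.symm
  · intro h
    refine ⟨y, ?_⟩
    simp only [Prod.smul_def, smul_eq_mul, mul_zero, mul_one, Prod.mk.injEq]
    exact ⟨h.symm, trivial⟩

private lemma closure52 :
    AddSubgroup.closure {((5 : ℤ), (2 : ℤ))} = gmap.ker := by
  ext ⟨x, y⟩
  rw [AddSubgroup.mem_closure_singleton, AddMonoidHom.mem_ker, gmap_apply]
  constructor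
  · rintro ⟨n, hn⟩
    simp only [Prod.smul_def, smul_eq_mul, Prod.mk.injEq] at hn
    obtain ⟨h1, h2⟩ := hn
    simp only
    omega
  · intro h
    simp only at h
    refine ⟨x - 2 * y, ?_⟩
    simp only [Prod.smul_def, smul_eq_mul, Prod.mk.injEq]
    omega

private lemma compl_aux {C : AddSubgroup (ℤ × ℤ)} {f : ℤ × ℤ →+ ℤ}
    (h : IsCompl f.ker C) (p : ℤ × ℤ) (hp : f p = 1) :
    ∃ c ∈ C, f c = 1 ∧ ∀ x ∈ C, x = f x • c := by
  obtain ⟨k, hk, c, hc, hkc⟩ := (AddSubgroup.mem_sup).1 (by rw [h.sup_eq_top]; trivial :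
    p ∈ f.ker ⊔ C)
  have hfk : f k = 0 := hk
  have hfc : f c = 1 := by
    have := congrArg f hkc
    simp only [map_add, hfk, zero_add, hp] at this
    exact this
  refine ⟨c, hc, hfc, fun x hx => ?_⟩
  have hmem : x - f x • c ∈ f.ker ⊓ C := by
    constructor
    · show f _ = 0
      rw [map_sub, map_zsmul, hfc, smul_eq_mul, mul_one, sub_self]
    · show x - f x • c ∈ C
      exact sub_mem hx (zsmul_mem hc _)
  rw [h.inf_eq_bot] at hmem
  exact sub_eq_zero.mp hmem

theorem stmt5 :
    (¬ ∃ a b : ℤ, (a = 1 ∨ a = -1) ∧ (2 * a - 5 * b = 1 ∨ 2 * a - 5 * b = -1)) ∧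
    IsCompl (AddSubgroup.closure {((1 : ℤ), (0 : ℤ))}) (AddSubgroup.closure {((0 : ℤ), (1 : ℤ))}) ∧
    IsCompl (AddSubgroup.closure {((7 : ℤ), (3 : ℤ))}) (AddSubgroup.closure {((5 : ℤ), (2 : ℤ))}) ∧
    ¬ ∃ C : AddSubgroup (ℤ × ℤ),
        IsCompl (AddSubgroup.closure {((0 : ℤ), (1 : ℤ))}) C ∧
        IsCompl (AddSubgroup.closure {((5 : ℤ), (2 : ℤ))}) C := by
  have part1 : ¬ ∃ a b : ℤ, (a = 1 ∨ a = -1) ∧ (2 * a - 5 * b = 1 ∨ 2 * a - 5 * b = -1) := by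
    rintro ⟨a, b, h1, h2⟩; omega
  refine ⟨part1, ?_, ?_, ?_⟩
  · constructor
    · rw [disjoint_iff_inf_le]
      rintro ⟨x, y⟩ hxy
      rw [AddSubgroup.mem_inf] at hxy
      obtain ⟨h1, h2⟩ := hxy
      rw [AddSubgroup.mem_closure_singleton] at h1 h2
      obtain ⟨m, hm⟩ := h1; obtain ⟨n, hn⟩ := h2
      simp only [Prod.smul_def, smul_eq_mul, mul_zero, mul_one, Prod.mk.injEq] at hm hn
      simp only [AddSubgroup.mem_bot, Prod.mk_eq_zero]
      omega
    · rw [codisjoint_iff_le_sup]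
      rintro ⟨x, y⟩ -
      rw [AddSubgroup.mem_sup]
      exact ⟨(x, 0), AddSubgroup.mem_closure_singleton.2 ⟨x, by simp⟩,
        (0, y), AddSubgroup.mem_closure_singleton.2 ⟨y, by simp⟩, by simp⟩
  · constructor
    · rw [disjoint_iff_inf_le]
      rintro ⟨x, y⟩ hxy
      rw [AddSubgroup.mem_inf] at hxy
      obtain ⟨h1, h2⟩ := hxy
      rw [AddSubgroup.mem_closure_singleton] at h1 h2
      obtain ⟨m, hm⟩ := h1; obtain ⟨n, hn⟩ := h2
      simp only [Prod.smul_def, smul_eq_mul, Prod.mk.injEq] at hm hn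
      simp only [AddSubgroup.mem_bot, Prod.mk_eq_zero]
      omega
    · rw [codisjoint_iff_le_sup]
      rintro ⟨x, y⟩ -
      rw [AddSubgroup.mem_sup]
      refine ⟨(5*y-2*x) • ((7:ℤ), (3:ℤ)), AddSubgroup.mem_closure_singleton.2 ⟨_, rfl⟩,
        (3*x-7*y) • ((5:ℤ), (2:ℤ)), AddSubgroup.mem_closure_singleton.2 ⟨_, rfl⟩, ?_⟩
      simp only [Prod.smul_def, smul_eq_mul, Prod.mk_add_mk, Prod.mk.injEq]
      constructor <;> ring
  · rintro ⟨C, hC1, hC2⟩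
    rw [closure01] at hC1
    rw [closure52] at hC2
    obtain ⟨c, hcC, hfc, hrep⟩ := compl_aux hC1 (1, 0) rfl
    obtain ⟨c', hc'C, hgc', _⟩ := compl_aux hC2 (-2, -1) (by rw [gmap_apply]; norm_num)
    have hc' : c' = c'.1 • c := hrep c' hc'C
    have key : (1 : ℤ) = c'.1 * gmap c := by
      have := congrArg gmap hc'
      rw [map_zsmul, smul_eq_mul, hgc'] at this
      exact this
    have hunit : IsUnit (gmap c) :=
      IsUnit.of_mul_eq_one _ (by rw [mul_comm]; exact key.symm)
    rw [Int.isUnit_iff] at hunit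
    have ha : c.1 = 1 := hfc
    refine part1 ⟨c.1, c.2, Or.inl ha, ?_⟩
    rw [gmap_apply] at hunit
    omega
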